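/- The group presented on six generators a, b, c, d, e, f with the six relations a·e·b⁻¹ = 1, b·f·c⁻¹ = 1, c·d·a⁻¹ = 1, a⁻¹·d·b = 1, b⁻¹·e·c = 1, c⁻¹·f·a = 1 (the trefoil template presentation) is isomorphic to the group presented on three generators a, b, c with relations a·b = b·c and b·c = c·a (the Wirtinger presentation of the trefoil). -/

import Mathlib

/-- The six relations of the trefoil template presentation on generators
`a, b, c, d, e, f` (encoded as `0, …, 5 : Fin 6`):
`a·e·b⁻¹`, `b·f·c⁻¹`, `c·d·a⁻¹`, `a⁻¹·d·b`, `b⁻¹·e·c`, `c⁻¹·f·a`. -/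
def trefoilTemplateRels : Set (FreeGroup (Fin 6)) :=
  let a := FreeGroup.of (0 : Fin 6)
  let b := FreeGroup.of (1 : Fin 6)
  let c := FreeGroup.of (2 : Fin 6)
  let d := FreeGroup.of (3 : Fin 6)
  let e := FreeGroup.of (4 : Fin 6)
  let f := FreeGroup.of (5 : Fin 6)
  {a * e * b⁻¹, b * f * c⁻¹, c * d * a⁻¹, a⁻¹ * d * b, b⁻¹ * e * c, c⁻¹ * f * a}

/-- The relations of the Wirtinger presentation of the trefoil on generators
`a, b, c` (encoded as `0, 1, 2 : Fin 3`): `a·b·(b·c)⁻¹` and `b·c·(c·a)⁻¹`,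
expressing `a·b = b·c` and `b·c = c·a`. -/
def trefoilWirtingerRels : Set (FreeGroup (Fin 3)) :=
  let a := FreeGroup.of (0 : Fin 3)
  let b := FreeGroup.of (1 : Fin 3)
  let c := FreeGroup.of (2 : Fin 3)
  {a * b * (b * c)⁻¹, b * c * (c * a)⁻¹}

namespace TrefoilAux

open PresentedGroup

abbrev T := PresentedGroup trefoilTemplateRels
abbrev W := PresentedGroup trefoilWirtingerRels

lemma mk_rel {α : Type*} {rels : Set (FreeGroup α)} {r : FreeGroup α} (h : r ∈ rels) :
    PresentedGroup.mk rels r = 1 :=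
  (QuotientGroup.eq_one_iff _).mpr (Subgroup.subset_normalClosure h)

-- Wirtinger relations as equalities
lemma w1 : (of (0:Fin 3) : W) * of 1 = of 1 * of 2 := by
  have h := mk_rel (rels := trefoilWirtingerRels)
    (r := FreeGroup.of 0 * FreeGroup.of 1 * (FreeGroup.of 1 * FreeGroup.of 2)⁻¹)
    (by simp [trefoilWirtingerRels])
  simp only [map_mul, map_inv, mul_inv_eq_one] at h
  exact h

lemma w2 : (of (1:Fin 3) : W) * of 2 = of 2 * of 0 := by
  have h := mk_rel (rels := trefoilWirtingerRels)
    (r := FreeGroup.of 1 * FreeGroup.of 2 * (FreeGroup.of 2 * FreeGroup.of 0)⁻¹)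
    (by simp [trefoilWirtingerRels])
  simp only [map_mul, map_inv, mul_inv_eq_one] at h
  exact h

-- Template relations as equalities
lemma trel (r : FreeGroup (Fin 6)) (h : r ∈ trefoilTemplateRels) :
    PresentedGroup.mk trefoilTemplateRels r = 1 := mk_rel h

lemma t1 : (of (0:Fin 6) : T) * of 4 = of 1 := by
  have h := trel (FreeGroup.of 0 * FreeGroup.of 4 * (FreeGroup.of 1)⁻¹)
    (by simp [trefoilTemplateRels])
  simp only [map_mul, map_inv, mul_inv_eq_one] at h
  exact h

lemma t2 : (of (1:Fin 6) : T) * of 5 = of 2 := by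
  have h := trel (FreeGroup.of 1 * FreeGroup.of 5 * (FreeGroup.of 2)⁻¹)
    (by simp [trefoilTemplateRels])
  simp only [map_mul, map_inv, mul_inv_eq_one] at h
  exact h

lemma t3 : (of (2:Fin 6) : T) * of 3 = of 0 := by
  have h := trel (FreeGroup.of 2 * FreeGroup.of 3 * (FreeGroup.of 0)⁻¹)
    (by simp [trefoilTemplateRels])
  simp only [map_mul, map_inv, mul_inv_eq_one] at h
  exact h

lemma t4 : ((of (0:Fin 6) : T))⁻¹ * of 3 * of 1 = 1 := by
  have h := trel ((FreeGroup.of 0)⁻¹ * FreeGroup.of 3 * FreeGroup.of 1)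
    (by simp [trefoilTemplateRels])
  simp only [map_mul, map_inv] at h
  exact h

lemma t5 : ((of (1:Fin 6) : T))⁻¹ * of 4 * of 2 = 1 := by
  have h := trel ((FreeGroup.of 1)⁻¹ * FreeGroup.of 4 * FreeGroup.of 2)
    (by simp [trefoilTemplateRels])
  simp only [map_mul, map_inv] at h
  exact h

lemma t6 : ((of (2:Fin 6) : T))⁻¹ * of 5 * of 0 = 1 := by
  have h := trel ((FreeGroup.of 2)⁻¹ * FreeGroup.of 5 * FreeGroup.of 0)
    (by simp [trefoilTemplateRels])
  simp only [map_mul, map_inv] at h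
  exact h

-- derived equalities in T
lemma e4 : (of (4:Fin 6) : T) = (of 0)⁻¹ * of 1 := by
  have := t1; group at this ⊢; rw [← this]; group

lemma e5 : (of (5:Fin 6) : T) = (of 1)⁻¹ * of 2 := by
  have := t2; group at this ⊢; rw [← this]; group

lemma e3 : (of (3:Fin 6) : T) = (of 2)⁻¹ * of 0 := by
  have := t3; group at this ⊢; rw [← this]; group

lemma tw1 : (of (0:Fin 6) : T) * of 1 = of 1 * of 2 := by
  have h5 := t5
  rw [e4] at h5
  -- b⁻¹ * (a⁻¹ * b) * c = 1
  have : ((of (1:Fin 6) : T))⁻¹ * ((of 0)⁻¹ * (of 1 * of 2)) = 1 := by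
    rw [← h5]; group
  have h2 := congrArg (fun x => (of (0:Fin 6) : T) * (of 1 * x)) this
  simpa [mul_assoc] using h2.symm

lemma tw2 : (of (1:Fin 6) : T) * of 2 = of 2 * of 0 := by
  have h6 := t6
  rw [e5] at h6
  have : ((of (2:Fin 6) : T))⁻¹ * ((of 1)⁻¹ * (of 2 * of 0)) = 1 := by
    rw [← h6]; group
  have h2 := congrArg (fun x => (of (1:Fin 6) : T) * (of 2 * x)) this
  simpa [mul_assoc] using h2.symm

def fW : Fin 6 → W
  | 0 => of 0
  | 1 => of 1
  | 2 => of 2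
  | 3 => (of 2)⁻¹ * of 0
  | 4 => (of 0)⁻¹ * of 1
  | 5 => (of 1)⁻¹ * of 2

lemma fW_rels : ∀ r ∈ trefoilTemplateRels, FreeGroup.lift fW r = 1 := by
  have hAB : (of (0:Fin 3) : W) * of 1 = of 2 * of 0 := w1.trans w2
  intro r hr
  simp only [trefoilTemplateRels, Set.mem_insert_iff, Set.mem_singleton_iff] at hr
  rcases hr with rfl|rfl|rfl|rfl|rfl|rfl <;>
    simp only [map_mul, map_inv, FreeGroup.lift_apply_of, fW]
  · group
  · group
  · group
  · calc ((of (0:Fin 3) : W))⁻¹ * ((of 2)⁻¹ * of 0) * of 1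
        = (of 0)⁻¹ * (of 2)⁻¹ * (of 0 * of 1) := by group
      _ = (of 0)⁻¹ * (of 2)⁻¹ * (of 2 * of 0) := by rw [hAB]
      _ = 1 := by group
  · calc ((of (1:Fin 3) : W))⁻¹ * ((of 0)⁻¹ * of 1) * of 2
        = (of 1)⁻¹ * (of 0)⁻¹ * (of 1 * of 2) := by group
      _ = (of 1)⁻¹ * (of 0)⁻¹ * (of 0 * of 1) := by rw [← w1]
      _ = 1 := by group
  · calc ((of (2:Fin 3) : W))⁻¹ * ((of 1)⁻¹ * of 2) * of 0
        = (of 2)⁻¹ * (of 1)⁻¹ * (of 2 * of 0) := by group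
      _ = (of 2)⁻¹ * (of 1)⁻¹ * (of 1 * of 2) := by rw [← w2]
      _ = 1 := by group

def gT : Fin 3 → T
  | 0 => of 0
  | 1 => of 1
  | 2 => of 2

lemma gT_rels : ∀ r ∈ trefoilWirtingerRels, FreeGroup.lift gT r = 1 := by
  intro r hr
  simp only [trefoilWirtingerRels, Set.mem_insert_iff, Set.mem_singleton_iff] at hr
  rcases hr with rfl|rfl <;>
    simp only [map_mul, map_inv, FreeGroup.lift_apply_of, gT, mul_inv_eq_one]
  · exact tw1
  · exact tw2

noncomputable def φ : T →* W := PresentedGroup.toGroup fW_rels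
noncomputable def ψ : W →* T := PresentedGroup.toGroup gT_rels

end TrefoilAux

/-- The trefoil template presentation is isomorphic to the Wirtinger
presentation `⟨a, b, c | a·b = b·c, b·c = c·a⟩` of the trefoil. -/
theorem trefoil_template_iso_wirtinger :
    Nonempty (PresentedGroup trefoilTemplateRels ≃* PresentedGroup trefoilWirtingerRels) := by
  open TrefoilAux PresentedGroup in
  refine ⟨MonoidHom.toMulEquiv φ ψ ?_ ?_⟩
  · ext i
    fin_cases i <;>
      simp only [MonoidHom.comp_apply, MonoidHom.id_apply, φ, ψ, toGroup.of, fW, gT,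
        map_mul, map_inv] <;>
      first | rfl | exact e3.symm | exact e4.symm | exact e5.symm
  · ext i
    fin_cases i <;>
      simp only [MonoidHom.comp_apply, MonoidHom.id_apply, φ, ψ, toGroup.of, fW, gT] <;> rfl
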